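/- If D1 and D2 are symmetric positive semidefinite real n×n matrices, then every eigenvalue of the product D = D1 * D2 is a nonnegative real number. -/

import Mathlib

open Matrix Polynomial
open scoped ComplexOrder

open scoped MatrixOrder in
private lemma psd_map {n : ℕ} {D : Matrix (Fin n) (Fin n) ℝ} (h : D.PosSemidef) :
    (D.map (algebraMap ℝ ℂ)).PosSemidef := by
  obtain ⟨B, hB⟩ := CStarAlgebra.nonneg_iff_eq_star_mul_self.mp h.nonneg
  rw [star_eq_conjTranspose] at hB
  subst hB
  have hmul : ((Bᴴ * B).map (algebraMap ℝ ℂ))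
      = (B.map (algebraMap ℝ ℂ))ᴴ * (B.map (algebraMap ℝ ℂ)) := by
    rw [Matrix.map_mul]
    congr 1
    ext i j
    simp [Matrix.conjTranspose_apply, Complex.conj_ofReal]
  rw [hmul]
  exact Matrix.posSemidef_conjTranspose_mul_self _

private lemma eval_charpoly' {n : ℕ} (M : Matrix (Fin n) (Fin n) ℂ) (μ : ℂ) :
    M.charpoly.eval μ = (μ • (1 : Matrix (Fin n) (Fin n) ℂ) - M).det := by
  rw [Matrix.charpoly, ← Polynomial.coe_evalRingHom, RingHom.map_det]
  congr 1
  ext i j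
  by_cases hij : i = j
  · subst hij
    simp [Matrix.charmatrix_apply_eq, Matrix.one_apply]
  · simp [Matrix.charmatrix_apply_ne _ _ _ hij, Matrix.one_apply, hij]

theorem stmt0 {n : ℕ} (D1 D2 : Matrix (Fin n) (Fin n) ℝ)
    (h1 : D1.PosSemidef) (h2 : D2.PosSemidef) :
    ∀ μ : ℂ, μ ∈ (((D1 * D2).charpoly).map (algebraMap ℝ ℂ)).roots →
      μ.im = 0 ∧ 0 ≤ μ.re := by
  intro μ hμ
  have hroot : (((D1 * D2).charpoly).map (algebraMap ℝ ℂ)).IsRoot μ :=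
    Polynomial.isRoot_of_mem_roots hμ
  rw [← Matrix.charpoly_map] at hroot
  set A := D1.map (algebraMap ℝ ℂ) with hA
  set B := D2.map (algebraMap ℝ ℂ) with hB
  have hAB : (D1 * D2).map (algebraMap ℝ ℂ) = A * B := Matrix.map_mul
  rw [hAB] at hroot
  have hA' : A.PosSemidef := psd_map h1
  have hB' : B.PosSemidef := psd_map h2
  -- get an eigenvector
  have hdet : (μ • (1 : Matrix (Fin n) (Fin n) ℂ) - A * B).det = 0 := by
    rw [← eval_charpoly']; exact hroot
  obtain ⟨v, hv0, hv⟩ := (Matrix.exists_mulVec_eq_zero_iff).mpr hdet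
  have heig : (A * B) *ᵥ v = μ • v := by
    have := sub_eq_zero.mpr (rfl : (μ • (1 : Matrix (Fin n) (Fin n) ℂ) - A * B) *ᵥ v
        = (μ • (1 : Matrix (Fin n) (Fin n) ℂ) - A * B) *ᵥ v)
    have h' := hv
    rw [Matrix.sub_mulVec, sub_eq_zero, Matrix.smul_mulVec, Matrix.one_mulVec] at h'
    exact h'.symm
  set x := B *ᵥ v with hx
  have hAx : A *ᵥ x = μ • v := by
    rw [hx, Matrix.mulVec_mulVec, heig]
  set c : ℂ := star v ⬝ᵥ B *ᵥ v with hc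
  have hc0 : (0 : ℂ) ≤ c := hB'.dotProduct_mulVec_nonneg v
  have hsxv : star x ⬝ᵥ v = c := by
    rw [hx, Matrix.star_mulVec, ← Matrix.dotProduct_mulVec, hB'.1, hc,
      Matrix.dotProduct_mulVec]
  have hq : star x ⬝ᵥ A *ᵥ x = μ * c := by
    rw [hAx, dotProduct_smul, smul_eq_mul, hsxv]
  have hq0 : (0 : ℂ) ≤ μ * c := hq ▸ hA'.dotProduct_mulVec_nonneg x
  by_cases hcz : c = 0
  · -- then B v = 0, so μ v = 0, so μ = 0
    have hBv : B *ᵥ v = 0 := (hB'.dotProduct_mulVec_zero_iff v).mp (hc ▸ hcz)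
    have : μ • v = 0 := by rw [← hAx, hx, hBv, Matrix.mulVec_zero]
    have hμ0 : μ = 0 := by
      by_contra hne
      exact hv0 (by simpa [hne] using congrArg (fun w => μ⁻¹ • w) this)
    simp [hμ0]
  · have hcre : 0 ≤ c.re ∧ c.im = 0 := by
      obtain ⟨ha, hb⟩ := Complex.le_def.mp hc0
      exact ⟨by simpa using ha, by simpa using hb.symm⟩
    have hqre : 0 ≤ (μ * c).re ∧ (μ * c).im = 0 := by
      obtain ⟨ha, hb⟩ := Complex.le_def.mp hq0
      exact ⟨by simpa using ha, by simpa using hb.symm⟩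
    have hcrepos : 0 < c.re := by
      rcases lt_or_eq_of_le hcre.1 with h | h
      · exact h
      · exact absurd (Complex.ext h.symm hcre.2) hcz
    have him : μ.im * c.re = 0 := by
      have := hqre.2
      rw [Complex.mul_im, hcre.2] at this
      simpa using this
    have hμim : μ.im = 0 := by
      rcases mul_eq_zero.mp him with h | h
      · exact h
      · exact absurd h (ne_of_gt hcrepos)
    constructor
    · exact hμim
    · have := hqre.1
      rw [Complex.mul_re, hcre.2, hμim] at this
      simpa using nonneg_of_mul_nonneg_right (by simpa [mul_comm] using this) hcrepos
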